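/- Let K > 0, μ > 0, λ ∈ ℝ, α ≥ 0, ξ ≠ 0, and γ > 1, and assume either λ ≤ 0, or λ > 0 and γ < 2. Let a, b : I → ℝ be C² positive functions on an interval I containing 0 satisfying the Emden system a''(t) − ξ²/a(t)³ = λ/(a(t)^{2γ−1} b(t)^{γ−1}) and b''(t) = λ/(a(t)^{2γ−2} b(t)^{γ}). Define s = (x² + y²)/a(t)² + z²/b(t)², f(s) = max( (−λ(γ−1)/(2Kγ) s + α)^{1/(γ−1)}, 0 ), ρ = f(s)/(a(t)² b(t)), u₁ = (a'(t)/a(t)) x − (ξ/a(t)²) y, u₂ = (ξ/a(t)²) x + (a'(t)/a(t)) y, u₃ = (b'(t)/b(t)) z. Then (ρ, u) also satisfies the isentropic compressible Navier–Stokes equations in ℝ³: ∂ₜρ + ∇·(ρu) = 0 and ρ(∂ₜu + (u·∇)u) + K∇(ρ^γ) = μΔu at every (t,x,y,z) with t ∈ I. -/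

import Mathlib

open Filter Topology

set_option maxHeartbeats 2000000

lemma aux_maxpow_hasDerivAt {e w : ℝ} (he : 0 < e) (h : 0 < w ∨ 1 < e) :
    HasDerivAt (fun v : ℝ => max v 0 ^ e) (e * max w 0 ^ (e - 1)) w := by
  rcases lt_trichotomy w 0 with hw | hw | hw
  · have he1 : 1 < e := h.resolve_left (by intro h'; linarith)
    have hev : (fun v : ℝ => max v 0 ^ e) =ᶠ[𝓝 w] fun _ => (0:ℝ) := by
      filter_upwards [eventually_lt_nhds hw] with v hv
      rw [max_eq_right hv.le, Real.zero_rpow he.ne']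
    have : HasDerivAt (fun _ : ℝ => (0:ℝ)) (e * max w 0 ^ (e - 1)) w := by
      rw [max_eq_right hw.le, Real.zero_rpow (by linarith : e - 1 ≠ 0), mul_zero]
      exact hasDerivAt_const _ _
    exact this.congr_of_eventuallyEq hev
  · subst hw
    have he1 : 1 < e := h.resolve_left (lt_irrefl 0)
    have hval : e * max (0:ℝ) 0 ^ (e - 1) = 0 := by
      rw [max_self, Real.zero_rpow (by linarith : e - 1 ≠ 0), mul_zero]
    rw [hval, hasDerivAt_iff_tendsto_slope]
    apply squeeze_zero_norm' (a := fun v : ℝ => |v| ^ (e - 1))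
    · filter_upwards [self_mem_nhdsWithin] with v hv
      simp only [Set.mem_compl_iff, Set.mem_singleton_iff] at hv
      rw [slope_def_field]
      simp only [max_self, Real.zero_rpow he.ne', sub_zero]
      rcases le_or_gt v 0 with hv0 | hv0
      · rw [max_eq_right hv0, Real.zero_rpow he.ne']
        simp [Real.rpow_nonneg (abs_nonneg v)]
      · rw [max_eq_left hv0.le, div_eq_mul_inv, ← Real.rpow_neg_one v,
          ← Real.rpow_add hv0, abs_of_pos hv0]
        rw [Real.norm_eq_abs, abs_of_nonneg (Real.rpow_nonneg hv0.le _)]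
        norm_num [sub_eq_add_neg]
    · have hc : ContinuousAt (fun v : ℝ => |v| ^ (e - 1)) 0 := by
        have h1 : ContinuousAt (fun u : ℝ => u ^ (e - 1)) |(0:ℝ)| := by
          simpa using Real.continuousAt_rpow_const 0 (e-1) (Or.inr (by linarith))
        exact h1.comp continuous_abs.continuousAt
      have := hc.tendsto
      simp only [abs_zero, Real.zero_rpow (by linarith : e - 1 ≠ 0)] at this
      exact this.mono_left nhdsWithin_le_nhds
  · have hev : (fun v : ℝ => max v 0 ^ e) =ᶠ[𝓝 w] fun v => v ^ e := by
      filter_upwards [eventually_gt_nhds hw] with v hv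
      rw [max_eq_left hv.le]
    have : HasDerivAt (fun v : ℝ => v ^ e) (e * max w 0 ^ (e - 1)) w := by
      rw [max_eq_left hw.le]
      exact Real.hasDerivAt_rpow_const (Or.inl hw.ne')
    exact this.congr_of_eventuallyEq hev

lemma aux_origin {g h : ℝ → ℝ} (D : ℝ)
    (hg : Filter.Tendsto g (𝓝 0) (𝓝 0))
    (hh : ∀ v, h v = g v * (D * v)) : HasDerivAt h 0 0 := by
  rw [hasDerivAt_iff_tendsto_slope]
  apply Tendsto.congr' (f₁ := fun v => g v * D)
  · filter_upwards [self_mem_nhdsWithin] with v hv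
    simp only [Set.mem_compl_iff, Set.mem_singleton_iff] at hv
    rw [slope_def_field, hh v, hh 0, mul_zero, mul_zero, sub_zero, sub_zero]
    field_simp
  · have : Tendsto (fun v => g v * D) (𝓝 0) (𝓝 (0 * D)) := hg.mul_const D
    rw [zero_mul] at this
    exact this.mono_left nhdsWithin_le_nhds


/-- The rotational self-similar solutions (γ > 1; λ ≤ 0, or λ > 0
    and γ < 2) of the compressible Euler equations also solve the isentropic
    compressible Navier–Stokes equations in ℝ³ with any viscosity μ > 0:
    ∂ₜρ + ∇·(ρu) = 0 and ρ(∂ₜu + (u·∇)u) + K∇(ρ^γ) = μΔu.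
    (Here `lam` denotes λ; real powers are `Real.rpow`.) -/
theorem navier_stokes_rotational_selfsimilar
    (K μ lam α ξ γ : ℝ)
    (hK : 0 < K) (hμ : 0 < μ) (hα : 0 ≤ α) (hξ : ξ ≠ 0) (hγ : 1 < γ)
    (hcase : lam ≤ 0 ∨ (0 < lam ∧ γ < 2))
    (I : Set ℝ) (hI_open : IsOpen I)
    (a b : ℝ → ℝ)
    (haC2 : ContDiffOn ℝ 2 a I) (hbC2 : ContDiffOn ℝ 2 b I)
    (ha_pos : ∀ t ∈ I, 0 < a t) (hb_pos : ∀ t ∈ I, 0 < b t)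
    (ha_ode : ∀ t ∈ I, deriv (deriv a) t - ξ ^ 2 / (a t) ^ 3
      = lam / ((a t) ^ (2 * γ - 1) * (b t) ^ (γ - 1)))
    (hb_ode : ∀ t ∈ I, deriv (deriv b) t
      = lam / ((a t) ^ (2 * γ - 2) * (b t) ^ γ))
    (f : ℝ → ℝ)
    (hf : ∀ s, f s = (max (-(lam * (γ - 1)) / (2 * K * γ) * s + α) 0) ^ (1 / (γ - 1)))
    (ρ u₁ u₂ u₃ : ℝ → ℝ → ℝ → ℝ → ℝ)
    (hρ : ∀ t x y z, ρ t x y z =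
      f ((x ^ 2 + y ^ 2) / (a t) ^ 2 + z ^ 2 / (b t) ^ 2) / ((a t) ^ 2 * b t))
    (hu₁ : ∀ t x y z, u₁ t x y z = (deriv a t / a t) * x - (ξ / (a t) ^ 2) * y)
    (hu₂ : ∀ t x y z, u₂ t x y z = (ξ / (a t) ^ 2) * x + (deriv a t / a t) * y)
    (hu₃ : ∀ t x y z, u₃ t x y z = (deriv b t / b t) * z) :
    ∀ t ∈ I, ∀ x y z : ℝ,
      -- conservation of mass
      (deriv (fun t' => ρ t' x y z) t
        + deriv (fun x' => ρ t x' y z * u₁ t x' y z) x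
        + deriv (fun y' => ρ t x y' z * u₂ t x y' z) y
        + deriv (fun z' => ρ t x y z' * u₃ t x y z') z = 0) ∧
      -- first momentum equation with viscosity
      (ρ t x y z * (deriv (fun t' => u₁ t' x y z) t
          + u₁ t x y z * deriv (fun x' => u₁ t x' y z) x
          + u₂ t x y z * deriv (fun y' => u₁ t x y' z) y
          + u₃ t x y z * deriv (fun z' => u₁ t x y z') z)
        + K * deriv (fun x' => ρ t x' y z ^ γ) x
        = μ * (deriv (fun x' => deriv (fun x'' => u₁ t x'' y z) x') x
            + deriv (fun y' => deriv (fun y'' => u₁ t x y'' z) y') y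
            + deriv (fun z' => deriv (fun z'' => u₁ t x y z'') z') z)) ∧
      -- second momentum equation with viscosity
      (ρ t x y z * (deriv (fun t' => u₂ t' x y z) t
          + u₁ t x y z * deriv (fun x' => u₂ t x' y z) x
          + u₂ t x y z * deriv (fun y' => u₂ t x y' z) y
          + u₃ t x y z * deriv (fun z' => u₂ t x y z') z)
        + K * deriv (fun y' => ρ t x y' z ^ γ) y
        = μ * (deriv (fun x' => deriv (fun x'' => u₂ t x'' y z) x') x
            + deriv (fun y' => deriv (fun y'' => u₂ t x y'' z) y') y
            + deriv (fun z' => deriv (fun z'' => u₂ t x y z'') z') z)) ∧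
      -- third momentum equation with viscosity
      (ρ t x y z * (deriv (fun t' => u₃ t' x y z) t
          + u₁ t x y z * deriv (fun x' => u₃ t x' y z) x
          + u₂ t x y z * deriv (fun y' => u₃ t x y' z) y
          + u₃ t x y z * deriv (fun z' => u₃ t x y z') z)
        + K * deriv (fun z' => ρ t x y z' ^ γ) z
        = μ * (deriv (fun x' => deriv (fun x'' => u₃ t x'' y z) x') x
            + deriv (fun y' => deriv (fun y'' => u₃ t x y'' z) y') y
            + deriv (fun z' => deriv (fun z'' => u₃ t x y z'') z') z)) := by
  intro t ht x y z
  have hI : I ∈ 𝓝 t := hI_open.mem_nhds ht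
  have hA : 0 < a t := ha_pos t ht
  have hB : 0 < b t := hb_pos t ht
  have hγ1 : (0:ℝ) < γ - 1 := by linarith
  have hγ0 : (0:ℝ) < γ := by linarith
  have hat : HasDerivAt a (deriv a t) t :=
    ((haC2.differentiableOn (by norm_num)).differentiableAt hI).hasDerivAt
  have hbt : HasDerivAt b (deriv b t) t :=
    ((hbC2.differentiableOn (by norm_num)).differentiableAt hI).hasDerivAt
  have hat' : HasDerivAt (deriv a) (deriv (deriv a) t) t :=
    (((haC2.deriv_of_isOpen (m := 1) hI_open (by norm_num)).differentiableOn
      (by norm_num)).differentiableAt hI).hasDerivAt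
  have hbt' : HasDerivAt (deriv b) (deriv (deriv b) t) t :=
    (((hbC2.deriv_of_isOpen (m := 1) hI_open (by norm_num)).differentiableOn
      (by norm_num)).differentiableAt hI).hasDerivAt
  have hODEa := ha_ode t ht
  have hODEb := hb_ode t ht
  simp only [hρ, hu₁, hu₂, hu₃, hf]
  set A := a t with hA_def
  set B := b t with hB_def
  set A1 := deriv a t with hA1_def
  set B1 := deriv b t with hB1_def
  set A2 := deriv (deriv a) t with hA2_def
  set B2 := deriv (deriv b) t with hB2_def
  set c := -(lam * (γ - 1)) / (2 * K * γ) with hc_def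
  set q := 1 / (γ - 1) with hq_def
  have hq0 : 0 < q := by rw [hq_def]; positivity
  have hqγ : 1 < q * γ := by
    rw [hq_def, div_mul_eq_mul_div, one_mul, lt_div_iff₀ hγ1]; linarith
  have hqq : q * γ - 1 = q := by rw [hq_def]; field_simp; ring
  have hAg : A ^ (γ - 1) = A ^ γ / A := by rw [Real.rpow_sub hA, Real.rpow_one]
  have hBg : B ^ (γ - 1) = B ^ γ / B := by rw [Real.rpow_sub hB, Real.rpow_one]
  have hA2g1 : A ^ (2 * γ - 1) = A ^ γ * A ^ γ / A := by
    rw [show 2 * γ - 1 = γ + (γ - 1) by ring, Real.rpow_add hA, hAg, mul_div_assoc]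
  have hA2g2 : A ^ (2 * γ - 2) = A ^ γ * A ^ γ / (A * A) := by
    rw [show 2 * γ - 2 = (γ - 1) + (γ - 1) by ring, Real.rpow_add hA, hAg, div_mul_div_comm]
  have hABγ : (A ^ 2 * B) ^ γ = A ^ γ * A ^ γ * B ^ γ := by
    rw [pow_two, Real.mul_rpow (by positivity) hB.le, Real.mul_rpow hA.le hA.le]
  have hPA : 0 < A ^ γ := Real.rpow_pos_of_pos hA γ
  have hPB : 0 < B ^ γ := Real.rpow_pos_of_pos hB γ
  -- linear-function derivatives
  have hlin1 : ∀ (r s v : ℝ), HasDerivAt (fun w => r * w - s) r v := fun r s v => by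
    simpa using ((hasDerivAt_id v).const_mul r).sub_const s
  have hlin2 : ∀ (r s v : ℝ), HasDerivAt (fun w => r - s * w) (-s) v := fun r s v => by
    simpa using ((hasDerivAt_id v).const_mul s).const_sub r
  have hlin3 : ∀ (r s v : ℝ), HasDerivAt (fun w => r + s * w) s v := fun r s v => by
    simpa using ((hasDerivAt_id v).const_mul s).const_add r
  have hlin5 : ∀ (r s v : ℝ), HasDerivAt (fun w => s * w + r) s v := fun r s v => by
    simpa using ((hasDerivAt_id v).const_mul s).add_const r
  have hlin4 : ∀ (r v : ℝ), HasDerivAt (fun w => r * w) r v := fun r v => by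
    simpa using (hasDerivAt_id v).const_mul r
  -- spatial inner derivatives of the argument of f
  have hwx : HasDerivAt (fun x' : ℝ => c * ((x' ^ 2 + y ^ 2) / A ^ 2 + z ^ 2 / B ^ 2) + α)
      (c * (2 * x / A ^ 2)) x := by
    have := (((((hasDerivAt_pow 2 x).add_const (y ^ 2)).div_const (A ^ 2)).add_const
      (z ^ 2 / B ^ 2)).const_mul c).add_const α
    refine (this).congr_deriv ?_
    push_cast; ring
  have hwy : HasDerivAt (fun y' : ℝ => c * ((x ^ 2 + y' ^ 2) / A ^ 2 + z ^ 2 / B ^ 2) + α)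
      (c * (2 * y / A ^ 2)) y := by
    have := (((((hasDerivAt_pow 2 y).const_add (x ^ 2)).div_const (A ^ 2)).add_const
      (z ^ 2 / B ^ 2)).const_mul c).add_const α
    refine (this).congr_deriv ?_
    push_cast; ring
  have hwz : HasDerivAt (fun z' : ℝ => c * ((x ^ 2 + y ^ 2) / A ^ 2 + z' ^ 2 / B ^ 2) + α)
      (c * (2 * z / B ^ 2)) z := by
    have := ((((hasDerivAt_pow 2 z).div_const (B ^ 2)).const_add
      ((x ^ 2 + y ^ 2) / A ^ 2)).const_mul c).add_const α
    refine (this).congr_deriv ?_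
    push_cast; ring
  refine ⟨?_, ?_, ?_, ?_⟩
  · -- mass conservation
    have hS0 : 0 ≤ (x ^ 2 + y ^ 2) / A ^ 2 + z ^ 2 / B ^ 2 := by positivity
    have hw0 : 0 ≤ c ∨ 1 < q := by
      rcases hcase with h | ⟨hl, h2⟩
      · left; rw [hc_def]
        apply div_nonneg
        · exact neg_nonneg.mpr (mul_nonpos_iff.mpr (Or.inr ⟨h, hγ1.le⟩))
        · exact (mul_pos (mul_pos two_pos hK) hγ0).le
      · right; rw [hq_def, lt_div_iff₀ hγ1, one_mul]; linarith only [h2, hγ1]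
    by_cases hreg : 0 < c * ((x ^ 2 + y ^ 2) / A ^ 2 + z ^ 2 / B ^ 2) + α ∨ 1 < q
    · -- regular case
      have hFD := aux_maxpow_hasDerivAt hq0 hreg
      have hwt : HasDerivAt (fun t' => c * ((x ^ 2 + y ^ 2) / a t' ^ 2 + z ^ 2 / b t' ^ 2) + α)
          (c * (-(2 * A1 * (x ^ 2 + y ^ 2)) / A ^ 3 - 2 * B1 * z ^ 2 / B ^ 3)) t := by
        have h1 := (hasDerivAt_const t (x ^ 2 + y ^ 2)).div (hat.pow 2) (pow_ne_zero 2 hA.ne')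
        have h2 := (hasDerivAt_const t (z ^ 2)).div (hbt.pow 2) (pow_ne_zero 2 hB.ne')
        refine (((h1.add h2).const_mul c).add_const α).congr_deriv ?_
        simp only [Pi.pow_apply, Pi.mul_apply, Pi.div_apply, ← hA_def, ← hB_def, ← hA1_def, ← hB1_def]; push_cast; field_simp <;> ring
      have hρt : HasDerivAt (fun t' =>
          max (c * ((x ^ 2 + y ^ 2) / a t' ^ 2 + z ^ 2 / b t' ^ 2) + α) 0 ^ q / (a t' ^ 2 * b t'))
          ((q * max (c * ((x ^ 2 + y ^ 2) / A ^ 2 + z ^ 2 / B ^ 2) + α) 0 ^ (q - 1)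
              * (c * (-(2 * A1 * (x ^ 2 + y ^ 2)) / A ^ 3 - 2 * B1 * z ^ 2 / B ^ 3))
              * (A ^ 2 * B)
            - max (c * ((x ^ 2 + y ^ 2) / A ^ 2 + z ^ 2 / B ^ 2) + α) 0 ^ q
              * (2 * A * A1 * B + A ^ 2 * B1)) / (A ^ 2 * B) ^ 2) t := by
        have hcomp := hFD.comp t hwt
        have hden := (hat.pow 2).mul hbt
        refine (hcomp.div hden (mul_pos (pow_pos hA 2) hB).ne').congr_deriv ?_
        simp only [Pi.pow_apply, Pi.mul_apply, Pi.div_apply, Function.comp_apply, ← hA_def, ← hB_def, ← hA1_def, ← hB1_def]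
        generalize max (c * ((x ^ 2 + y ^ 2) / A ^ 2 + z ^ 2 / B ^ 2) + α) 0 = M
        push_cast; field_simp <;> ring
      have hρx : HasDerivAt (fun x' : ℝ =>
          max (c * ((x' ^ 2 + y ^ 2) / A ^ 2 + z ^ 2 / B ^ 2) + α) 0 ^ q / (A ^ 2 * B)
            * (A1 / A * x' - ξ / A ^ 2 * y))
          (q * max (c * ((x ^ 2 + y ^ 2) / A ^ 2 + z ^ 2 / B ^ 2) + α) 0 ^ (q - 1)
              * (c * (2 * x / A ^ 2)) / (A ^ 2 * B) * (A1 / A * x - ξ / A ^ 2 * y)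
            + max (c * ((x ^ 2 + y ^ 2) / A ^ 2 + z ^ 2 / B ^ 2) + α) 0 ^ q / (A ^ 2 * B)
              * (A1 / A)) x := by
        refine (((hFD.comp x hwx).div_const (A ^ 2 * B)).mul
          (hlin1 (A1 / A) (ξ / A ^ 2 * y) x)).congr_deriv ?_
        rfl
      have hρy : HasDerivAt (fun y' : ℝ =>
          max (c * ((x ^ 2 + y' ^ 2) / A ^ 2 + z ^ 2 / B ^ 2) + α) 0 ^ q / (A ^ 2 * B)
            * (ξ / A ^ 2 * x + A1 / A * y'))
          (q * max (c * ((x ^ 2 + y ^ 2) / A ^ 2 + z ^ 2 / B ^ 2) + α) 0 ^ (q - 1)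
              * (c * (2 * y / A ^ 2)) / (A ^ 2 * B) * (ξ / A ^ 2 * x + A1 / A * y)
            + max (c * ((x ^ 2 + y ^ 2) / A ^ 2 + z ^ 2 / B ^ 2) + α) 0 ^ q / (A ^ 2 * B)
              * (A1 / A)) y := by
        refine (((hFD.comp y hwy).div_const (A ^ 2 * B)).mul
          (hlin3 (ξ / A ^ 2 * x) (A1 / A) y)).congr_deriv ?_
        rfl
      have hρz : HasDerivAt (fun z' : ℝ =>
          max (c * ((x ^ 2 + y ^ 2) / A ^ 2 + z' ^ 2 / B ^ 2) + α) 0 ^ q / (A ^ 2 * B)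
            * (B1 / B * z'))
          (q * max (c * ((x ^ 2 + y ^ 2) / A ^ 2 + z ^ 2 / B ^ 2) + α) 0 ^ (q - 1)
              * (c * (2 * z / B ^ 2)) / (A ^ 2 * B) * (B1 / B * z)
            + max (c * ((x ^ 2 + y ^ 2) / A ^ 2 + z ^ 2 / B ^ 2) + α) 0 ^ q / (A ^ 2 * B)
              * (B1 / B)) z := by
        refine (((hFD.comp z hwz).div_const (A ^ 2 * B)).mul (hlin4 (B1 / B) z)).congr_deriv ?_
        rfl
      rw [hρt.deriv, hρx.deriv, hρy.deriv, hρz.deriv]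
      field_simp
      ring
    · -- degenerate case
      push_neg at hreg
      obtain ⟨hw₀le, hqle⟩ := hreg
      have hcnn : 0 ≤ c := hw0.resolve_right (not_lt.mpr hqle)
      have hcS : 0 ≤ c * ((x ^ 2 + y ^ 2) / A ^ 2 + z ^ 2 / B ^ 2) := mul_nonneg hcnn hS0
      have hα0 : α = 0 := le_antisymm (by linarith only [hw₀le, hcS]) hα
      have hcS0 : c * ((x ^ 2 + y ^ 2) / A ^ 2 + z ^ 2 / B ^ 2) = 0 := by linarith only [hw₀le, hcS, hα0]
      rcases mul_eq_zero.mp hcS0 with hc0 | hS00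
      · -- c = 0 : ρ vanishes identically
        have k1 : ∀ s : ℝ, max (c * s + α) 0 ^ q = 0 := by
          intro s; rw [hc0, hα0]; simp [Real.zero_rpow hq0.ne']
        simp only [k1, zero_div, zero_mul, deriv_const]
        norm_num
      · -- the origin
        have h1 : 0 ≤ (x ^ 2 + y ^ 2) / A ^ 2 := by positivity
        have h2 : 0 ≤ z ^ 2 / B ^ 2 := by positivity
        have hxy : x ^ 2 + y ^ 2 = 0 := by
          have h3 : (x ^ 2 + y ^ 2) / A ^ 2 = 0 := by linarith only [hS00, h1, h2]
          rcases div_eq_zero_iff.mp h3 with h | h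
          · exact h
          · exact absurd h (pow_pos hA 2).ne'
        have hx0 : x = 0 := sq_eq_zero_iff.mp
          (by linarith only [hxy, sq_nonneg x, sq_nonneg y])
        have hy0 : y = 0 := sq_eq_zero_iff.mp
          (by linarith only [hxy, sq_nonneg x, sq_nonneg y])
        have hz0 : z = 0 := by
          have h3 : z ^ 2 / B ^ 2 = 0 := by linarith only [hS00, h1, h2]
          rcases div_eq_zero_iff.mp h3 with h | h
          · exact sq_eq_zero_iff.mp h
          · exact absurd h (pow_pos hB 2).ne'
        subst hx0; subst hy0; subst hz0; subst hα0
        have k1 : (fun t' => max (c * (((0:ℝ) ^ 2 + 0 ^ 2) / a t' ^ 2 + 0 ^ 2 / b t' ^ 2) + 0) 0 ^ q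
            / (a t' ^ 2 * b t')) = fun _ => (0:ℝ) := by
          funext v
          norm_num [Real.zero_rpow hq0.ne']
        have gx : Tendsto (fun v : ℝ => max (c * (v ^ 2 / A ^ 2)) 0 ^ q / (A ^ 2 * B))
            (𝓝 0) (𝓝 0) := by
          have hcont : Continuous fun v : ℝ => max (c * (v ^ 2 / A ^ 2)) 0 := by fun_prop
          have h1' : Tendsto (fun v : ℝ => max (c * (v ^ 2 / A ^ 2)) 0) (𝓝 0) (𝓝 0) := by
            simpa using hcont.tendsto 0
          have h2' : ContinuousAt (fun u : ℝ => u ^ q) 0 :=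
            Real.continuousAt_rpow_const 0 q (Or.inr hq0.le)
          have h3' := h2'.tendsto.comp h1'
          rw [Real.zero_rpow hq0.ne'] at h3'
          simpa [Function.comp] using h3'.div_const (A ^ 2 * B)
        have gz : Tendsto (fun v : ℝ => max (c * (v ^ 2 / B ^ 2)) 0 ^ q / (A ^ 2 * B))
            (𝓝 0) (𝓝 0) := by
          have hcont : Continuous fun v : ℝ => max (c * (v ^ 2 / B ^ 2)) 0 := by fun_prop
          have h1' : Tendsto (fun v : ℝ => max (c * (v ^ 2 / B ^ 2)) 0) (𝓝 0) (𝓝 0) := by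
            simpa using hcont.tendsto 0
          have h2' : ContinuousAt (fun u : ℝ => u ^ q) 0 :=
            Real.continuousAt_rpow_const 0 q (Or.inr hq0.le)
          have h3' := h2'.tendsto.comp h1'
          rw [Real.zero_rpow hq0.ne'] at h3'
          simpa [Function.comp] using h3'.div_const (A ^ 2 * B)
        have dx0 : HasDerivAt (fun x' : ℝ =>
            max (c * ((x' ^ 2 + 0 ^ 2) / A ^ 2 + 0 ^ 2 / B ^ 2) + 0) 0 ^ q / (A ^ 2 * B)
              * (A1 / A * x' - ξ / A ^ 2 * 0)) 0 0 := by
          apply aux_origin (A1 / A) gx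
          intro v; norm_num
        have dy0 : HasDerivAt (fun y' : ℝ =>
            max (c * (((0:ℝ) ^ 2 + y' ^ 2) / A ^ 2 + 0 ^ 2 / B ^ 2) + 0) 0 ^ q / (A ^ 2 * B)
              * (ξ / A ^ 2 * 0 + A1 / A * y')) 0 0 := by
          apply aux_origin (A1 / A) gx
          intro v; norm_num
        have dz0 : HasDerivAt (fun z' : ℝ =>
            max (c * (((0:ℝ) ^ 2 + 0 ^ 2) / A ^ 2 + z' ^ 2 / B ^ 2) + 0) 0 ^ q / (A ^ 2 * B)
              * (B1 / B * z')) 0 0 := by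
          apply aux_origin (B1 / B) gz
          intro v; norm_num
        rw [k1, dx0.deriv, dy0.deriv, dz0.deriv]
        simp
  · -- momentum 1
    have e1 : deriv (fun x'' : ℝ => A1 / A * x'' - ξ / A ^ 2 * y) = fun _ => A1 / A :=
      funext fun v => (hlin1 _ _ v).deriv
    have e2 : deriv (fun y'' : ℝ => A1 / A * x - ξ / A ^ 2 * y'') = fun _ => -(ξ / A ^ 2) :=
      funext fun v => (hlin2 _ _ v).deriv
    have e3 : deriv (fun _ : ℝ => A1 / A * x - ξ / A ^ 2 * y) = fun _ => (0:ℝ) :=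
      funext fun v => deriv_const v _
    have d1 : HasDerivAt (fun t' => deriv a t' / a t' * x - ξ / a t' ^ 2 * y)
        ((A2 / A - (A1 / A) ^ 2) * x + 2 * ξ * A1 / A ^ 3 * y) t := by
      have h1 := (hat'.div hat hA.ne').mul_const x
      have h2 := ((hasDerivAt_const t ξ).div (hat.pow 2) (pow_ne_zero 2 hA.ne')).mul_const y
      refine (h1.sub h2).congr_deriv ?_
      simp only [Pi.pow_apply, Pi.mul_apply, Pi.div_apply, ← hA_def, ← hB_def, ← hA1_def, ← hB1_def]; push_cast; field_simp <;> ring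
    have hfx : (fun x' : ℝ => (max (c * ((x' ^ 2 + y ^ 2) / A ^ 2 + z ^ 2 / B ^ 2) + α) 0 ^ q
          / (A ^ 2 * B)) ^ γ)
        = fun x' : ℝ => max (c * ((x' ^ 2 + y ^ 2) / A ^ 2 + z ^ 2 / B ^ 2) + α) 0 ^ (q * γ)
          / (A ^ 2 * B) ^ γ := by
      funext v
      rw [Real.div_rpow (Real.rpow_nonneg (le_max_right _ _) _) (by positivity),
        ← Real.rpow_mul (le_max_right _ _)]
    have dP : HasDerivAt (fun x' : ℝ =>
        max (c * ((x' ^ 2 + y ^ 2) / A ^ 2 + z ^ 2 / B ^ 2) + α) 0 ^ (q * γ))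
        ((q * γ) * max (c * ((x ^ 2 + y ^ 2) / A ^ 2 + z ^ 2 / B ^ 2) + α) 0 ^ (q * γ - 1)
          * (c * (2 * x / A ^ 2))) x :=
      (aux_maxpow_hasDerivAt (mul_pos hq0 hγ0) (Or.inr hqγ)).comp x hwx
    rw [hfx, (dP.div_const ((A ^ 2 * B) ^ γ)).deriv, d1.deriv, hqq]
    simp only [e1, e2, e3, deriv_const]
    have hODE1 : A2 = ξ ^ 2 / A ^ 3 + lam / (A ^ γ * A ^ γ / A * (B ^ γ / B)) := by
      rw [← hA2g1, ← hBg]; linarith only [hODEa]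
    rw [hODE1, hABγ, hc_def, hq_def]
    field_simp
    ring
  · -- momentum 2
    have e4 : deriv (fun x'' : ℝ => ξ / A ^ 2 * x'' + A1 / A * y) = fun _ => ξ / A ^ 2 :=
      funext fun v => (hlin5 _ _ v).deriv
    have e5 : deriv (fun y'' : ℝ => ξ / A ^ 2 * x + A1 / A * y'') = fun _ => A1 / A :=
      funext fun v => (hlin3 _ _ v).deriv
    have e6 : deriv (fun _ : ℝ => ξ / A ^ 2 * x + A1 / A * y) = fun _ => (0:ℝ) :=
      funext fun v => deriv_const v _
    have d2 : HasDerivAt (fun t' => ξ / a t' ^ 2 * x + deriv a t' / a t' * y)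
        (-(2 * ξ * A1 / A ^ 3) * x + (A2 / A - (A1 / A) ^ 2) * y) t := by
      have h1 := ((hasDerivAt_const t ξ).div (hat.pow 2) (pow_ne_zero 2 hA.ne')).mul_const x
      have h2 := (hat'.div hat hA.ne').mul_const y
      refine (h1.add h2).congr_deriv ?_
      simp only [Pi.pow_apply, Pi.mul_apply, Pi.div_apply, ← hA_def, ← hB_def, ← hA1_def, ← hB1_def]; push_cast; field_simp <;> ring
    have hfy : (fun y' : ℝ => (max (c * ((x ^ 2 + y' ^ 2) / A ^ 2 + z ^ 2 / B ^ 2) + α) 0 ^ q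
          / (A ^ 2 * B)) ^ γ)
        = fun y' : ℝ => max (c * ((x ^ 2 + y' ^ 2) / A ^ 2 + z ^ 2 / B ^ 2) + α) 0 ^ (q * γ)
          / (A ^ 2 * B) ^ γ := by
      funext v
      rw [Real.div_rpow (Real.rpow_nonneg (le_max_right _ _) _) (by positivity),
        ← Real.rpow_mul (le_max_right _ _)]
    have dP : HasDerivAt (fun y' : ℝ =>
        max (c * ((x ^ 2 + y' ^ 2) / A ^ 2 + z ^ 2 / B ^ 2) + α) 0 ^ (q * γ))
        ((q * γ) * max (c * ((x ^ 2 + y ^ 2) / A ^ 2 + z ^ 2 / B ^ 2) + α) 0 ^ (q * γ - 1)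
          * (c * (2 * y / A ^ 2))) y :=
      (aux_maxpow_hasDerivAt (mul_pos hq0 hγ0) (Or.inr hqγ)).comp y hwy
    rw [hfy, (dP.div_const ((A ^ 2 * B) ^ γ)).deriv, d2.deriv, hqq]
    simp only [e4, e5, e6, deriv_const]
    have hODE1 : A2 = ξ ^ 2 / A ^ 3 + lam / (A ^ γ * A ^ γ / A * (B ^ γ / B)) := by
      rw [← hA2g1, ← hBg]; linarith only [hODEa]
    rw [hODE1, hABγ, hc_def, hq_def]
    field_simp
    ring
  · -- momentum 3
    have e7 : deriv (fun _ : ℝ => B1 / B * z) = fun _ => (0:ℝ) :=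
      funext fun v => deriv_const v _
    have e8 : deriv (fun z'' : ℝ => B1 / B * z'') = fun _ => B1 / B :=
      funext fun v => (hlin4 _ v).deriv
    have d3 : HasDerivAt (fun t' => deriv b t' / b t' * z)
        ((B2 / B - (B1 / B) ^ 2) * z) t := by
      refine ((hbt'.div hbt hB.ne').mul_const z).congr_deriv ?_
      simp only [Pi.pow_apply, Pi.mul_apply, Pi.div_apply, ← hA_def, ← hB_def, ← hA1_def, ← hB1_def]; field_simp
    have hfz : (fun z' : ℝ => (max (c * ((x ^ 2 + y ^ 2) / A ^ 2 + z' ^ 2 / B ^ 2) + α) 0 ^ q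
          / (A ^ 2 * B)) ^ γ)
        = fun z' : ℝ => max (c * ((x ^ 2 + y ^ 2) / A ^ 2 + z' ^ 2 / B ^ 2) + α) 0 ^ (q * γ)
          / (A ^ 2 * B) ^ γ := by
      funext v
      rw [Real.div_rpow (Real.rpow_nonneg (le_max_right _ _) _) (by positivity),
        ← Real.rpow_mul (le_max_right _ _)]
    have dP : HasDerivAt (fun z' : ℝ =>
        max (c * ((x ^ 2 + y ^ 2) / A ^ 2 + z' ^ 2 / B ^ 2) + α) 0 ^ (q * γ))
        ((q * γ) * max (c * ((x ^ 2 + y ^ 2) / A ^ 2 + z ^ 2 / B ^ 2) + α) 0 ^ (q * γ - 1)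
          * (c * (2 * z / B ^ 2))) z :=
      (aux_maxpow_hasDerivAt (mul_pos hq0 hγ0) (Or.inr hqγ)).comp z hwz
    rw [hfz, (dP.div_const ((A ^ 2 * B) ^ γ)).deriv, d3.deriv, hqq]
    simp only [e7, e8, deriv_const]
    have hODE3 : B2 = lam / (A ^ γ * A ^ γ / (A * A) * B ^ γ) := by
      rw [← hA2g2]; exact hODEb
    rw [hODE3, hABγ, hc_def, hq_def]
    field_simp
    ring
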